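/- arXiv:0907.1103 — 2 statements merged into one kernel-verified Lean document; each statement's English description precedes it below -/
import Mathlib

section
/- For every integer m ≥ 2 and every Δ ∈ {1, …, m−1}, h_Δ + h_{m−Δ} ≤ h_{⌈m/2⌉} + h_{⌊m/2⌋}; that is, the quantity 2·h_m − h_Δ − h_{m−Δ} over Δ ∈ {1, …, m−1} is minimized when Δ = ⌊m/2⌋ (equivalently ⌈m/2⌉). -/
open Finset Real

noncomputable def Fs (m : ℕ) : ℝ :=
  ∑ i ∈ Finset.range (m + 1), (m.choose i : ℝ) * Real.log (m.choose i)

noncomputable def Ts (m : ℕ) : ℝ :=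
  ∑ i ∈ Finset.range (m + 1), (m.choose i : ℝ) * Real.log (i + 1)

/-- `binEnt m` is the Shannon entropy (in nats) of the binomial distribution
`Binomial(m, 1/2)`: `h_m = -∑_{i=0}^m binom(m,i) 2^{-m} ln(binom(m,i) 2^{-m})`. -/
noncomputable def binEnt (m : ℕ) : ℝ :=
  -∑ i ∈ Finset.range (m + 1),
      ((m.choose i : ℝ) / 2 ^ m) * Real.log ((m.choose i : ℝ) / 2 ^ m)

lemma choose_pos_real {m i : ℕ} (h : i ≤ m) : (0:ℝ) < (m.choose i : ℝ) := by
  exact_mod_cast Nat.choose_pos h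

lemma sum_choose_real (m : ℕ) : ∑ i ∈ Finset.range (m+1), (m.choose i : ℝ) = 2 ^ m := by
  rw [← Nat.cast_sum]
  rw [Nat.sum_range_choose]
  push_cast
  ring

lemma binEnt_eq (m : ℕ) : binEnt m = m * Real.log 2 - Fs m / 2 ^ m := by
  unfold binEnt Fs
  have h2 : (0:ℝ) < 2 ^ m := by positivity
  have : ∀ i ∈ Finset.range (m+1),
      ((m.choose i : ℝ) / 2 ^ m) * Real.log ((m.choose i : ℝ) / 2 ^ m)
      = ((m.choose i : ℝ) * Real.log (m.choose i)) / 2 ^ m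
        - (m * Real.log 2) * ((m.choose i : ℝ) / 2 ^ m) := by
    intro i hi
    rw [Finset.mem_range] at hi
    have hc : (0:ℝ) < (m.choose i : ℝ) := choose_pos_real (by omega)
    rw [Real.log_div (ne_of_gt hc) (ne_of_gt h2), Real.log_pow]
    push_cast
    ring
  rw [Finset.sum_congr rfl this, Finset.sum_sub_distrib, ← Finset.sum_div, ← Finset.mul_sum,
    ← Finset.sum_div, sum_choose_real, div_self (ne_of_gt h2)]
  ring

/-- Pascal's rule summation: if `b 0 = 0` then
`∑_{i<m+2} C(m+1,i) b i = ∑_{i<m+1} C(m,i) (b i + b (i+1))`. -/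
lemma pascal_sum (m : ℕ) (b : ℕ → ℝ) (hb : b 0 = 0) :
    ∑ i ∈ Finset.range (m+2), ((m+1).choose i : ℝ) * b i
      = ∑ i ∈ Finset.range (m+1), (m.choose i : ℝ) * (b i + b (i+1)) := by
  rw [Finset.sum_range_succ'] 
  simp only [hb, Nat.choose_zero_right, Nat.cast_one, mul_zero, add_zero]
  have : ∀ i ∈ Finset.range (m+1),
      ((m+1).choose (i+1) : ℝ) * b (i+1)
        = (m.choose i : ℝ) * b (i+1) + (m.choose (i+1) : ℝ) * b (i+1) := by
    intro i hi
    rw [Nat.choose_succ_succ]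
    push_cast
    ring
  rw [Finset.sum_congr rfl this, Finset.sum_add_distrib]
  have h2 : ∑ i ∈ Finset.range (m+1), (m.choose (i+1) : ℝ) * b (i+1)
      = ∑ i ∈ Finset.range (m+1), (m.choose i : ℝ) * b i := by
    have e := Finset.sum_range_succ' (fun j => (m.choose j : ℝ) * b j) (m+1)
    rw [Finset.sum_range_succ (fun j => (m.choose j : ℝ) * b j) (m+1)] at e
    simp only [Nat.choose_succ_self, Nat.cast_zero, zero_mul, add_zero, hb, mul_zero,
      Nat.choose_zero_right, Nat.cast_one] at e
    linarith [e]
  rw [h2]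
  rw [← Finset.sum_add_distrib]
  apply Finset.sum_congr rfl
  intro i hi; ring

lemma log_choose_succ_succ {m i : ℕ} (h : i ≤ m) :
    Real.log (((m+1).choose (i+1) : ℝ))
      = Real.log (m+1) + Real.log (m.choose i) - Real.log (i+1) := by
  have hnat : (m+1) * m.choose i = (m+1).choose (i+1) * (i+1) := by
    have := Nat.add_one_mul_choose_eq m i
    simpa [Nat.succ_eq_add_one] using this
  have hreal : ((m:ℝ)+1) * (m.choose i : ℝ) = ((m+1).choose (i+1) : ℝ) * ((i:ℝ)+1) := by
    exact_mod_cast hnat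
  have h1 : (0:ℝ) < (m:ℝ)+1 := by positivity
  have h2 : (0:ℝ) < (m.choose i : ℝ) := choose_pos_real h
  have h3 : (0:ℝ) < ((m+1).choose (i+1) : ℝ) := choose_pos_real (by omega)
  have h4 : (0:ℝ) < (i:ℝ)+1 := by positivity
  have := congrArg Real.log hreal
  rw [Real.log_mul (ne_of_gt h1) (ne_of_gt h2), Real.log_mul (ne_of_gt h3) (ne_of_gt h4)] at this
  push_cast at this ⊢
  linarith

lemma log_choose_succ {m i : ℕ} (h : i ≤ m) :
    Real.log (((m+1).choose i : ℝ))
      = Real.log (m+1) + Real.log (m.choose i) - Real.log ((m+1-i : ℕ) : ℝ) := by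
  have hnat : (m+1).choose i * (m+1-i) = (m+1) * m.choose i := by
    have hsymm : m.choose i = m.choose (m - i) := (Nat.choose_symm h).symm
    have h2 := Nat.add_one_mul_choose_eq m (m - i)
    have h3 : (m+1).choose (m+1-i) = (m+1).choose i := Nat.choose_symm (by omega)
    have h4 : m - i + 1 = m + 1 - i := by omega
    rw [hsymm, h2, h4, h3]
  have hreal : (((m+1).choose i : ℝ)) * (((m+1-i:ℕ)):ℝ) = ((m:ℝ)+1) * (m.choose i : ℝ) := by
    exact_mod_cast hnat
  have h1 : (0:ℝ) < (m:ℝ)+1 := by positivity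
  have h2 : (0:ℝ) < (m.choose i : ℝ) := choose_pos_real h
  have h3 : (0:ℝ) < ((m+1).choose i : ℝ) := choose_pos_real (by omega)
  have h4 : (0:ℝ) < ((m+1-i:ℕ) : ℝ) := by
    have : 0 < m + 1 - i := by omega
    exact_mod_cast this
  have := congrArg Real.log hreal
  rw [Real.log_mul (ne_of_gt h3) (ne_of_gt h4), Real.log_mul (ne_of_gt h1) (ne_of_gt h2)] at this
  push_cast at this ⊢
  linarith

lemma sum_log_reflect (m : ℕ) :
    ∑ i ∈ Finset.range (m+1), (m.choose i : ℝ) * Real.log ((m+1-i : ℕ) : ℝ) = Ts m := by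
  unfold Ts
  rw [← Finset.sum_range_reflect (fun i => (m.choose i : ℝ) * Real.log ((m+1-i : ℕ) : ℝ)) (m+1)]
  apply Finset.sum_congr rfl
  intro j hj
  rw [Finset.mem_range] at hj
  have hj' : j ≤ m := by omega
  have e1 : m + 1 - 1 - j = m - j := by omega
  have e2 : m.choose (m - j) = m.choose j := Nat.choose_symm hj'
  have e3 : m + 1 - (m - j) = j + 1 := by omega
  rw [e1, e2, e3]
  push_cast
  ring

lemma Fs_succ (m : ℕ) :
    Fs (m+1) = 2 * Fs m + 2^(m+1) * Real.log (m+1) - 2 * Ts m := by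
  have hb : Real.log (((m+1).choose 0 : ℕ) : ℝ) = 0 := by simp
  have key := pascal_sum m (fun i => Real.log (((m+1).choose i : ℕ) : ℝ)) hb
  unfold Fs
  rw [key]
  have : ∀ i ∈ Finset.range (m+1),
      (m.choose i : ℝ) * (Real.log (((m+1).choose i : ℕ) : ℝ)
          + Real.log (((m+1).choose (i+1) : ℕ) : ℝ))
        = 2 * ((m.choose i : ℝ) * Real.log (m.choose i))
          + 2 * Real.log (m+1) * (m.choose i : ℝ)
          - (m.choose i : ℝ) * Real.log ((m+1-i : ℕ) : ℝ)
          - (m.choose i : ℝ) * Real.log ((i:ℝ)+1) := by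
    intro i hi
    rw [Finset.mem_range] at hi
    have h : i ≤ m := by omega
    rw [log_choose_succ h, log_choose_succ_succ h]
    push_cast
    ring
  rw [Finset.sum_congr rfl this]
  rw [Finset.sum_sub_distrib, Finset.sum_sub_distrib, Finset.sum_add_distrib,
    ← Finset.mul_sum, ← Finset.mul_sum, sum_choose_real, sum_log_reflect]
  have hT : ∑ i ∈ Finset.range (m+1), (m.choose i : ℝ) * Real.log ((i:ℝ)+1) = Ts m := by
    unfold Ts
    apply Finset.sum_congr rfl
    intro i hi
    norm_cast
  rw [hT]
  ring

lemma Ts_succ (m : ℕ) :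
    Ts (m+1) = Ts m + ∑ i ∈ Finset.range (m+1), (m.choose i : ℝ) * Real.log ((i:ℝ) + 2) := by
  have key := pascal_sum m (fun i => Real.log ((i:ℝ) + 1)) (by norm_num)
  unfold Ts
  rw [key]
  rw [← Finset.sum_add_distrib]
  apply Finset.sum_congr rfl
  intro i hi
  push_cast
  ring

-- continuation lemmas

lemma sum_inv_choose (m : ℕ) :
    ∑ i ∈ Finset.range (m+1), (m.choose i : ℝ) / ((i:ℝ)+1) = (2^(m+1) - 1) / ((m:ℝ)+1) := by
  have term : ∀ i ∈ Finset.range (m+1),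
      (m.choose i : ℝ) / ((i:ℝ)+1) = ((m+1).choose (i+1) : ℝ) / ((m:ℝ)+1) := by
    intro i hi
    have hnat : (m+1) * m.choose i = (m+1).choose (i+1) * (i+1) := by
      simpa [Nat.succ_eq_add_one] using Nat.add_one_mul_choose_eq m i
    have hreal : ((m:ℝ)+1) * (m.choose i : ℝ) = ((m+1).choose (i+1) : ℝ) * ((i:ℝ)+1) := by
      exact_mod_cast hnat
    have h1 : (m:ℝ)+1 ≠ 0 := by positivity
    have h4 : (i:ℝ)+1 ≠ 0 := by positivity
    field_simp
    linarith [hreal]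
  rw [Finset.sum_congr rfl term, ← Finset.sum_div]
  congr 1
  have hnat : ∑ i ∈ Finset.range (m+2), (m+1).choose i = 2^(m+1) := Nat.sum_range_choose (m+1)
  rw [Finset.sum_range_succ'] at hnat
  have : ((∑ i ∈ Finset.range (m+1), (m+1).choose (i+1) : ℕ) : ℝ) + 1 = 2^(m+1) := by
    exact_mod_cast congrArg (Nat.cast : ℕ → ℝ) hnat
  push_cast at this ⊢
  linarith [this]

lemma sum_inv2_choose (m : ℕ) :
    ∑ i ∈ Finset.range (m+1), (m.choose i : ℝ) / (((i:ℝ)+1)*((i:ℝ)+2))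
      = (2^(m+2) - (m:ℝ) - 3) / (((m:ℝ)+1)*((m:ℝ)+2)) := by
  have term : ∀ i ∈ Finset.range (m+1),
      (m.choose i : ℝ) / (((i:ℝ)+1)*((i:ℝ)+2))
        = ((m+2).choose (i+2) : ℝ) / (((m:ℝ)+1)*((m:ℝ)+2)) := by
    intro i hi
    have h1 : (m+1) * m.choose i = (m+1).choose (i+1) * (i+1) := by
      simpa [Nat.succ_eq_add_one] using Nat.add_one_mul_choose_eq m i
    have h2 : (m+2) * (m+1).choose (i+1) = (m+2).choose (i+2) * (i+2) := by
      simpa [Nat.succ_eq_add_one] using Nat.add_one_mul_choose_eq (m+1) (i+1)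
    have hnat : (m+1) * (m+2) * m.choose i = (m+2).choose (i+2) * ((i+1) * (i+2)) := by
      calc (m+1) * (m+2) * m.choose i = (m+2) * ((m+1) * m.choose i) := by ring
      _ = (m+2) * ((m+1).choose (i+1) * (i+1)) := by rw [h1]
      _ = ((m+2) * (m+1).choose (i+1)) * (i+1) := by ring
      _ = ((m+2).choose (i+2) * (i+2)) * (i+1) := by rw [h2]
      _ = (m+2).choose (i+2) * ((i+1) * (i+2)) := by ring
    have hreal : ((m:ℝ)+1) * ((m:ℝ)+2) * (m.choose i : ℝ)
        = ((m+2).choose (i+2) : ℝ) * (((i:ℝ)+1) * ((i:ℝ)+2)) := by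
      exact_mod_cast hnat
    have h3 : ((i:ℝ)+1)*((i:ℝ)+2) ≠ 0 := by positivity
    have h4 : ((m:ℝ)+1)*((m:ℝ)+2) ≠ 0 := by positivity
    field_simp
    linarith [hreal]
  rw [Finset.sum_congr rfl term, ← Finset.sum_div]
  congr 1
  have hnat : ∑ i ∈ Finset.range (m+3), (m+2).choose i = 2^(m+2) := Nat.sum_range_choose (m+2)
  rw [Finset.sum_range_succ'] at hnat
  rw [Finset.sum_range_succ'] at hnat
  have hc : (∑ i ∈ Finset.range (m+1), (((m+2).choose (i+1+1) : ℕ) : ℝ))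
      + ((m:ℝ)+2) + 1 = 2^(m+2) := by
    have h := congrArg (Nat.cast : ℕ → ℝ) hnat
    push_cast [Nat.choose_one_right, Nat.choose_zero_right] at h
    linarith [h]
  have e : ∀ x ∈ Finset.range (m+1),
      (((m+2).choose (x+2) : ℕ) : ℝ) = (((m+2).choose (x+1+1) : ℕ) : ℝ) := by
    intro x hx
    norm_num
  rw [Finset.sum_congr rfl e]
  push_cast at hc ⊢
  linarith [hc]

lemma trapezoid {x : ℝ} (hx : 0 < x) :
    Real.log (x+1) - Real.log x ≤ (1/x + 1/(x+1))/2 := by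
  set t : ℝ := (x+1)/x with ht
  have ht1 : 1 ≤ t := by
    rw [ht, le_div_iff₀ hx]; linarith
  have ht0 : 0 < t := by linarith
  have hlog : 0 ≤ Real.log t := Real.log_nonneg ht1
  have hs : Real.log t ≤ Real.sinh (Real.log t) := Real.self_le_sinh_iff.2 hlog
  rw [Real.sinh_eq, Real.exp_log ht0, ← Real.log_inv, Real.exp_log (by positivity)] at hs
  have hlt : Real.log t = Real.log (x+1) - Real.log x := by
    rw [ht, Real.log_div (by linarith) (ne_of_gt hx)]
  have harith : (t - t⁻¹)/2 = (1/x + 1/(x+1))/2 := by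
    rw [ht]
    have hx1 : x + 1 ≠ 0 := by positivity
    field_simp
    ring
  rw [hlt, harith] at hs
  exact hs

lemma midpoint_bd {x : ℝ} (hx : 0 < x) : 1/(x+1) ≤ Real.log (x+1) - Real.log x := by
  have h1 : (0:ℝ) < x/(x+1) := by positivity
  have := Real.log_le_sub_one_of_pos h1
  rw [Real.log_div (ne_of_gt hx) (by positivity)] at this
  have hx1 : x + 1 ≠ 0 := by positivity
  have : Real.log x - Real.log (x+1) ≤ x/(x+1) - 1 := this
  have he : x/(x+1) - 1 = -(1/(x+1)) := by field_simp; ring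
  linarith [he ▸ this]

noncomputable def gs (m : ℕ) : ℝ := Real.log ((m:ℝ)+1) - Ts m / 2^m
noncomputable def phis (m : ℕ) : ℝ := Fs m / 2^m

lemma phi_succ (m : ℕ) : phis (m+1) = phis m + gs m := by
  unfold phis gs
  rw [Fs_succ]
  have h2 : (2:ℝ)^m ≠ 0 := by positivity
  rw [pow_succ]
  push_cast
  field_simp
  ring

lemma gs_mono_succ (m : ℕ) : gs m ≤ gs (m+1) := by
  have htrap : ∀ i : ℕ, Real.log ((i:ℝ)+2) - Real.log ((i:ℝ)+1)
      ≤ (1/((i:ℝ)+1) + 1/((i:ℝ)+2))/2 := by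
    intro i
    have h := trapezoid (x := (i:ℝ)+1) (by positivity)
    rw [show ((i:ℝ)+1)+1 = (i:ℝ)+2 by ring] at h
    exact h
  have hmid : 1/((m:ℝ)+2) ≤ Real.log ((m:ℝ)+2) - Real.log ((m:ℝ)+1) := by
    have h := midpoint_bd (x := (m:ℝ)+1) (by positivity)
    rw [show ((m:ℝ)+1)+1 = (m:ℝ)+2 by ring] at h
    exact h
  set U : ℝ := ∑ i ∈ Finset.range (m+1), (m.choose i : ℝ) * Real.log ((i:ℝ) + 2) with hUdef
  have hbound : U - Ts m ≤ 2^(m+1) * (Real.log ((m:ℝ)+2) - Real.log ((m:ℝ)+1)) := by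
    have h1 : U - Ts m
        = ∑ i ∈ Finset.range (m+1),
            (m.choose i : ℝ) * (Real.log ((i:ℝ)+2) - Real.log ((i:ℝ)+1)) := by
      rw [hUdef]
      unfold Ts
      rw [← Finset.sum_sub_distrib]
      apply Finset.sum_congr rfl
      intro i hi
      push_cast
      ring
    have h2 : ∑ i ∈ Finset.range (m+1),
          (m.choose i : ℝ) * (Real.log ((i:ℝ)+2) - Real.log ((i:ℝ)+1))
        ≤ ∑ i ∈ Finset.range (m+1),
            ((m.choose i : ℝ) / ((i:ℝ)+1) - ((m.choose i : ℝ) / (((i:ℝ)+1)*((i:ℝ)+2)))/2) := by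
      apply Finset.sum_le_sum
      intro i hi
      have hc : (0:ℝ) ≤ (m.choose i : ℝ) := by positivity
      have e : (m.choose i : ℝ) / ((i:ℝ)+1) - ((m.choose i : ℝ) / (((i:ℝ)+1)*((i:ℝ)+2)))/2
          = (m.choose i : ℝ) * ((1/((i:ℝ)+1) + 1/((i:ℝ)+2))/2) := by
        have d1 : ((i:ℝ)+1) ≠ 0 := by positivity
        have d2 : ((i:ℝ)+2) ≠ 0 := by positivity
        field_simp
        ring
      rw [e]
      exact mul_le_mul_of_nonneg_left (htrap i) hc
    have h3 : ∑ i ∈ Finset.range (m+1),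
          ((m.choose i : ℝ) / ((i:ℝ)+1) - ((m.choose i : ℝ) / (((i:ℝ)+1)*((i:ℝ)+2)))/2)
        = (2^(m+1) - 1) / ((m:ℝ)+1)
          - ((2^(m+2) - (m:ℝ) - 3) / (((m:ℝ)+1)*((m:ℝ)+2)))/2 := by
      rw [Finset.sum_sub_distrib, sum_inv_choose, ← Finset.sum_div, sum_inv2_choose]
    have h4 : (2^(m+1) - 1) / ((m:ℝ)+1)
          - ((2^(m+2) - (m:ℝ) - 3) / (((m:ℝ)+1)*((m:ℝ)+2)))/2
        = (2^(m+2) - 1) / (2*((m:ℝ)+2)) := by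
      have d1 : ((m:ℝ)+1) ≠ 0 := by positivity
      have d2 : ((m:ℝ)+2) ≠ 0 := by positivity
      field_simp
      ring
    have h5 : (2^(m+2) - 1) / (2*((m:ℝ)+2)) ≤ 2^(m+1) * (1/((m:ℝ)+2)) := by
      have hp : ((m:ℝ)+2) ≠ 0 := by positivity
      have e : 2^(m+1) * (1/((m:ℝ)+2)) * (2*((m:ℝ)+2)) = 2^(m+2) := by
        field_simp
        ring
      rw [div_le_iff₀ (by positivity)]
      linarith [e]
    have h6 : 2^(m+1) * (1/((m:ℝ)+2))
        ≤ 2^(m+1) * (Real.log ((m:ℝ)+2) - Real.log ((m:ℝ)+1)) :=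
      mul_le_mul_of_nonneg_left hmid (by positivity)
    calc U - Ts m = _ := h1
      _ ≤ _ := h2
      _ = _ := h3
      _ = _ := h4
      _ ≤ _ := h5
      _ ≤ _ := h6
  have key : (Ts m + U)/2^(m+1) - Ts m/2^m
      ≤ Real.log ((m:ℝ)+2) - Real.log ((m:ℝ)+1) := by
    have e : (Ts m + U)/2^(m+1) - Ts m/2^m = (U - Ts m)/2^(m+1) := by
      rw [pow_succ]
      have h2 : (2:ℝ)^m ≠ 0 := by positivity
      field_simp
      ring
    rw [e, div_le_iff₀ (by positivity : (0:ℝ) < 2^(m+1))]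
    linarith [hbound]
  unfold gs
  rw [Ts_succ]
  rw [← hUdef]
  have e2 : Real.log (((m:ℝ)+1)+1) = Real.log ((m:ℝ)+2) := by
    congr 1
    ring
  push_cast
  linarith [key, e2]

lemma gs_mono : Monotone gs := monotone_nat_of_le_succ gs_mono_succ

lemma phi_step (a k : ℕ) : phis (a+1) + phis (a+k+1) ≤ phis a + phis (a+k+2) := by
  have h1 : phis (a+1) = phis a + gs a := phi_succ a
  have h2 : phis (a+k+2) = phis (a+k+1) + gs (a+k+1) := phi_succ (a+k+1)
  have h3 : gs a ≤ gs (a+k+1) := gs_mono (by omega)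
  linarith

lemma conv_min : ∀ k a b : ℕ, a ≤ b → b ≤ a + k →
    phis ((a+b+1)/2) + phis ((a+b)/2) ≤ phis a + phis b := by
  intro k
  induction k with
  | zero =>
    intro a b hab hba
    have hb : b = a := by omega
    subst hb
    have e1 : (b+b+1)/2 = b := by omega
    have e2 : (b+b)/2 = b := by omega
    rw [e1, e2]
  | succ k ih =>
    intro a b hab hba
    by_cases hb : b ≤ a + k
    · exact ih a b hab hb
    · by_cases h2 : a + 2 ≤ b
      · obtain ⟨j, hj⟩ : ∃ j, b = a + j + 2 := ⟨b - a - 2, by omega⟩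
        have hstep := phi_step a j
        have hIH := ih (a+1) (b-1) (by omega) (by omega)
        have e : (a+1) + (b-1) = a + b := by omega
        rw [e] at hIH
        have eb : a + j + 2 = b := hj.symm
        have eb1 : a + j + 1 = b - 1 := by omega
        rw [eb, eb1] at hstep
        linarith
      · have hcase : b = a ∨ b = a + 1 := by omega
        rcases hcase with hc | hc
        · subst hc
          have e1 : (b+b+1)/2 = b := by omega
          have e2 : (b+b)/2 = b := by omega
          rw [e1, e2]
        · subst hc
          have e1 : (a+(a+1)+1)/2 = a+1 := by omega
          have e2 : (a+(a+1))/2 = a := by omega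
          rw [e1, e2]
          linarith

/-- For every `m ≥ 2` and every `Δ ∈ {1, …, m−1}`,
`h_Δ + h_{m−Δ} ≤ h_{⌈m/2⌉} + h_{⌊m/2⌋}`; i.e. `2·h_m − h_Δ − h_{m−Δ}` is minimized over
`Δ ∈ {1, …, m−1}` at `Δ = ⌊m/2⌋` (equivalently `⌈m/2⌉`). -/
theorem stmt_4 :
    ∀ m : ℕ, 2 ≤ m → ∀ Δ : ℕ, 1 ≤ Δ → Δ ≤ m - 1 →
      binEnt Δ + binEnt (m - Δ) ≤ binEnt ((m + 1) / 2) + binEnt (m / 2) := by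
  intro m hm Δ h1 h2
  have hΔm : Δ ≤ m := by omega
  have hsum : Δ + (m - Δ) = m := by omega
  have hmono : phis ((m+1)/2) + phis (m/2) ≤ phis Δ + phis (m - Δ) := by
    rcases le_total Δ (m - Δ) with h | h
    · have hc := conv_min m Δ (m-Δ) h (by omega)
      rw [hsum] at hc
      exact hc
    · have hsum' : (m-Δ) + Δ = m := by omega
      have hc := conv_min m (m-Δ) Δ h (by omega)
      rw [hsum'] at hc
      linarith
  have be : ∀ k : ℕ, binEnt k = k * Real.log 2 - phis k := fun k => binEnt_eq k
  rw [be, be, be, be]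
  have c1 : ((m - Δ : ℕ) : ℝ) = (m:ℝ) - (Δ:ℝ) := by
    push_cast [hΔm]
    ring
  have c2 : (((m+1)/2 : ℕ) : ℝ) + ((m/2 : ℕ) : ℝ) = (m:ℝ) := by
    have : ((m+1)/2 : ℕ) + (m/2 : ℕ) = m := by omega
    exact_mod_cast this
  rw [c1]
  have d1 : ((((m+1)/2 : ℕ) : ℝ) + ((m/2 : ℕ) : ℝ)) * Real.log 2 = (m:ℝ) * Real.log 2 := by
    rw [c2]
  linarith [hmono, d1]
end

section
/- Let A = (A_1, …, A_n) be uniform on {0,1}^n, let m ≥ 1, and let p₁ < p₂ < … < p_r ≤ n be positions satisfying p₁ ≥ m and p_j − p_{j−1} ≥ m for all 2 ≤ j ≤ r. Then the joint Shannon entropy of the rank answers (R(p₁), …, R(p_r)) is at least r·h_m. -/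
/-- The Shannon entropy (in nats) of the random variable `X` defined on the finite
probability space `Ω` with probability mass function `μ`:
`H(X) = -∑_y Pr[X = y] · ln Pr[X = y]`. -/
noncomputable def finEntropy {Ω α : Type*} [Fintype Ω] [DecidableEq α]
    (μ : Ω → ℝ) (X : Ω → α) : ℝ :=
  -∑ y ∈ Finset.univ.image X,
      (∑ ω ∈ Finset.univ.filter (fun ω => X ω = y), μ ω) *
        Real.log (∑ ω ∈ Finset.univ.filter (fun ω => X ω = y), μ ω)

/-- The rank (prefix-sum) answer `R(j) = ∑_{i=1}^j A_i` for a bit-array `A`. -/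
def rank {n : ℕ} (A : Fin n → Bool) (j : ℕ) : ℕ :=
  (Finset.univ.filter (fun i : Fin n => (i : ℕ) < j ∧ A i = true)).card

open Finset Real



lemma binEnt_eq_s6 (m : ℕ) :
    binEnt m = ∑ i ∈ Finset.range (m + 1), Real.negMulLog ((m.choose i : ℝ) / 2 ^ m) := by
  rw [binEnt, ← Finset.sum_neg_distrib]
  exact Finset.sum_congr rfl fun i _ => by rw [Real.negMulLog, neg_mul]

lemma negMulLog_avg_ge (a b : ℝ) (ha : 0 ≤ a) (hb : 0 ≤ b) :
    (Real.negMulLog a + Real.negMulLog b) / 2 ≤ Real.negMulLog ((a + b) / 2) := by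
  have := Real.concaveOn_negMulLog.2 (Set.mem_Ici.2 ha) (Set.mem_Ici.2 hb)
    (by norm_num : (0:ℝ) ≤ 1/2) (by norm_num : (0:ℝ) ≤ 1/2) (by norm_num)
  simp only [smul_eq_mul] at this
  calc (Real.negMulLog a + Real.negMulLog b) / 2
      = (1/2) * Real.negMulLog a + (1/2) * Real.negMulLog b := by ring
    _ ≤ Real.negMulLog ((1/2) * a + (1/2) * b) := this
    _ = Real.negMulLog ((a + b) / 2) := by congr 1; ring

lemma binEnt_le_succ (k : ℕ) : binEnt k ≤ binEnt (k + 1) := by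
  set f : ℕ → ℝ := fun i => Real.negMulLog ((k.choose i : ℝ) / 2 ^ k) with hf
  have hq : ∀ i : ℕ, (0:ℝ) ≤ (k.choose i : ℝ) / 2 ^ k := fun i => by positivity
  have e1 : ∑ i ∈ Finset.range (k+1), f i = binEnt k := (binEnt_eq_s6 k).symm
  have e2 : ∑ i ∈ Finset.range (k+1), f (i+1) = binEnt k - f 0 := by
    have h1 : ∑ i ∈ Finset.range (k+2), f i = ∑ i ∈ Finset.range (k+1), f (i+1) + f 0 :=
      Finset.sum_range_succ' f (k+1)
    have h2 : ∑ i ∈ Finset.range (k+2), f i = ∑ i ∈ Finset.range (k+1), f i + f (k+1) :=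
      Finset.sum_range_succ f (k+1)
    have h3 : f (k+1) = 0 := by
      simp [hf, Nat.choose_succ_self]
    rw [e1] at h2
    linarith
  have key : ∀ i ∈ Finset.range (k+1),
      (f (i+1) + f i) / 2 ≤ Real.negMulLog (((k+1).choose (i+1) : ℝ) / 2 ^ (k+1)) := by
    intro i _
    have h : (((k+1).choose (i+1) : ℝ) / 2 ^ (k+1))
        = (((k.choose (i+1) : ℝ) / 2 ^ k) + ((k.choose i : ℝ) / 2 ^ k)) / 2 := by
      rw [Nat.choose_succ_succ' k i]; push_cast; ring
    rw [h]
    exact negMulLog_avg_ge _ _ (hq _) (hq _)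
  have key0 : f 0 / 2 ≤ Real.negMulLog (((k+1).choose 0 : ℝ) / 2 ^ (k+1)) := by
    have h : (((k+1).choose 0 : ℝ) / 2 ^ (k+1)) = (0 + (k.choose 0 : ℝ) / 2 ^ k) / 2 := by
      rw [Nat.choose_zero_right, Nat.choose_zero_right]; push_cast; ring
    rw [h]
    have := negMulLog_avg_ge 0 ((k.choose 0 : ℝ) / 2 ^ k) le_rfl (hq 0)
    rw [Real.negMulLog_zero] at this
    calc f 0 / 2 = (0 + f 0) / 2 := by ring
      _ ≤ _ := this
  have expand : binEnt (k+1)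
      = Real.negMulLog (((k+1).choose 0 : ℝ) / 2 ^ (k+1))
        + ∑ i ∈ Finset.range (k+1), Real.negMulLog (((k+1).choose (i+1) : ℝ) / 2 ^ (k+1)) := by
    rw [binEnt_eq_s6 (k+1),
      Finset.sum_range_succ' (fun i => Real.negMulLog (((k+1).choose i : ℝ) / 2 ^ (k+1))) (k+1)]
    ring
  have hsum : ∑ i ∈ Finset.range (k+1), (f (i+1) + f i) / 2
      ≤ ∑ i ∈ Finset.range (k+1), Real.negMulLog (((k+1).choose (i+1) : ℝ) / 2 ^ (k+1)) :=
    Finset.sum_le_sum key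
  have harith : ∑ i ∈ Finset.range (k+1), (f (i+1) + f i) / 2 = binEnt k - f 0 / 2 := by
    rw [show (fun i => (f (i+1) + f i)/2) = fun i => f (i+1)/2 + f i / 2 from funext fun i => by ring]
    rw [Finset.sum_add_distrib, ← Finset.sum_div, ← Finset.sum_div, e1, e2]
    ring
  rw [expand]
  linarith
lemma binEnt_mono : Monotone binEnt := monotone_nat_of_le_succ binEnt_le_succ



lemma finEntropy_eq_sum {Ω α : Type*} [Fintype Ω] [DecidableEq α]
    (μ : Ω → ℝ) (X : Ω → α) (s : Finset α) (hs : Finset.univ.image X ⊆ s) :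
    finEntropy μ X
      = ∑ y ∈ s, Real.negMulLog (∑ ω ∈ Finset.univ.filter (fun ω => X ω = y), μ ω) := by
  rw [finEntropy, ← Finset.sum_neg_distrib]
  simp only [Real.negMulLog_eq_neg]
  apply Finset.sum_subset hs
  intro y _ hy
  have : Finset.univ.filter (fun ω => X ω = y) = ∅ := by
    apply Finset.filter_eq_empty_iff.2
    intro ω _
    exact fun h => hy (Finset.mem_image.2 ⟨ω, Finset.mem_univ ω, h⟩)
  rw [this, Finset.sum_empty]
  simp

lemma finEntropy_comp_injective {Ω α β : Type*} [Fintype Ω] [DecidableEq α] [DecidableEq β]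
    (μ : Ω → ℝ) (X : Ω → α) (f : α → β) (hf : Function.Injective f) :
    finEntropy μ (fun ω => f (X ω)) = finEntropy μ X := by
  rw [finEntropy, finEntropy]
  rw [show (Finset.univ.image fun ω => f (X ω)) = (Finset.univ.image X).image f from
    (Finset.image_image).symm]
  rw [Finset.sum_image (fun x _ y _ h => hf h)]
  apply neg_inj.2
  apply Finset.sum_congr rfl
  intro y _
  have : (Finset.univ.filter fun ω => f (X ω) = f y) = Finset.univ.filter fun ω => X ω = y := by
    apply Finset.filter_congr
    intro ω _
    exact ⟨fun h => hf h, fun h => by rw [h]⟩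
  rw [this]

lemma negMulLog_prod' {ι : Type*} [DecidableEq ι] (s : Finset ι) (x : ι → ℝ) :
    Real.negMulLog (∏ i ∈ s, x i)
      = ∑ i ∈ s, (∏ k ∈ s.erase i, x k) * Real.negMulLog (x i) := by
  induction s using Finset.induction_on with
  | empty => simp
  | insert _ _ ha ih =>
    rename_i a s
    rw [Finset.prod_insert ha, Real.negMulLog_mul, ih, Finset.sum_insert ha,
      Finset.erase_insert ha, Finset.mul_sum]
    congr 1
    apply Finset.sum_congr rfl
    intro i hi
    have hne : i ≠ a := fun h => ha (h ▸ hi)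
    rw [Finset.erase_insert_of_ne hne.symm, Finset.prod_insert (fun h => ha (Finset.mem_of_mem_erase h))]
    ring

lemma sum_negMulLog_prod {r : ℕ} (f : Fin r → Finset ℕ) (q : Fin r → ℕ → ℝ)
    (h1 : ∀ j, ∑ i ∈ f j, q j i = 1) :
    ∑ d ∈ Fintype.piFinset f, Real.negMulLog (∏ j, q j (d j))
      = ∑ j, ∑ i ∈ f j, Real.negMulLog (q j i) := by
  have step1 : ∀ d : Fin r → ℕ,
      Real.negMulLog (∏ j, q j (d j))
        = ∑ j, ∏ k, (if k = j then Real.negMulLog (q k (d k)) else q k (d k)) := by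
    intro d
    rw [negMulLog_prod' Finset.univ (fun j => q j (d j))]
    apply Finset.sum_congr rfl
    intro j _
    rw [← Finset.mul_prod_erase Finset.univ _ (Finset.mem_univ j)]
    simp only [if_pos rfl]
    rw [mul_comm]
    congr 1
    apply Finset.prod_congr rfl
    intro k hk
    rw [if_neg (Finset.ne_of_mem_erase hk)]
  calc ∑ d ∈ Fintype.piFinset f, Real.negMulLog (∏ j, q j (d j))
      = ∑ d ∈ Fintype.piFinset f, ∑ j,
          ∏ k, (if k = j then Real.negMulLog (q k (d k)) else q k (d k)) :=
        Finset.sum_congr rfl fun d _ => step1 d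
    _ = ∑ j, ∑ d ∈ Fintype.piFinset f,
          ∏ k, (if k = j then Real.negMulLog (q k (d k)) else q k (d k)) := Finset.sum_comm
    _ = ∑ j, ∏ k, ∑ i ∈ f k, (if k = j then Real.negMulLog (q k i) else q k i) := by
        apply Finset.sum_congr rfl
        intro j _
        exact (Finset.prod_univ_sum f fun k i => if k = j then Real.negMulLog (q k i) else q k i).symm
    _ = ∑ j, ∑ i ∈ f j, Real.negMulLog (q j i) := by
        apply Finset.sum_congr rfl
        intro j _
        rw [Finset.prod_eq_single j]
        · simp
        · intro k _ hk
          simp only [if_neg hk]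
          exact h1 k
        · intro h
          exact absurd (Finset.mem_univ j) h


section Classifier

variable {n r : ℕ} (p : Fin (r+1) → ℕ)

/-- classifier: the largest index `j'` with `p j' ≤ i`. -/
def cls (hp0 : p 0 = 0) (i : Fin n) : Fin (r+1) :=
  (Finset.univ.filter (fun j' => p j' ≤ (i:ℕ))).max'
    ⟨0, Finset.mem_filter.2 ⟨Finset.mem_univ _, by rw [hp0]; exact Nat.zero_le _⟩⟩

variable (hp0 : p 0 = 0)

lemma cls_le (i : Fin n) : p (cls p hp0 i) ≤ (i:ℕ) := by
  have h := Finset.max'_mem (Finset.univ.filter (fun j' => p j' ≤ (i:ℕ)))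
    ⟨0, Finset.mem_filter.2 ⟨Finset.mem_univ _, by rw [hp0]; exact Nat.zero_le _⟩⟩
  exact (Finset.mem_filter.1 h).2

lemma le_cls {i : Fin n} {j' : Fin (r+1)} (h : p j' ≤ (i:ℕ)) : j' ≤ cls p hp0 i :=
  Finset.le_max' _ j' (Finset.mem_filter.2 ⟨Finset.mem_univ _, h⟩)

lemma cls_eq_last_iff (i : Fin n) :
    cls p hp0 i = Fin.last r ↔ p (Fin.last r) ≤ (i:ℕ) := by
  constructor
  · intro h; rw [← h]; exact cls_le p hp0 i
  · intro h; exact le_antisymm (Fin.le_last _) (le_cls p hp0 h)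

lemma cls_eq_castSucc_iff (hmono : StrictMono p) (j : Fin r) (i : Fin n) :
    cls p hp0 i = j.castSucc ↔ p j.castSucc ≤ (i:ℕ) ∧ (i:ℕ) < p j.succ := by
  constructor
  · intro h
    refine ⟨h ▸ cls_le p hp0 i, ?_⟩
    by_contra hlt
    push_neg at hlt
    have := le_cls p hp0 (i := i) (j' := j.succ) hlt
    rw [h] at this
    exact absurd (lt_of_le_of_lt this Fin.castSucc_lt_succ) (lt_irrefl _)
  · rintro ⟨h1, h2⟩
    have hle : j.castSucc ≤ cls p hp0 i := le_cls p hp0 h1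
    have hlt : cls p hp0 i < j.succ :=
      hmono.lt_iff_lt.1 (lt_of_le_of_lt (cls_le p hp0 i) h2)
    exact le_antisymm (Fin.castSucc_lt_succ_iff.1 hlt) hle

lemma cls_le_castSucc_iff (hmono : StrictMono p) (j : Fin r) (i : Fin n) :
    cls p hp0 i ≤ j.castSucc ↔ (i:ℕ) < p j.succ := by
  constructor
  · intro h
    by_contra hlt
    push_neg at hlt
    have := le_cls p hp0 (i := i) (j' := j.succ) hlt
    exact absurd (lt_of_le_of_lt (this.trans h) Fin.castSucc_lt_succ) (lt_irrefl _)
  · intro h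
    have : cls p hp0 i < j.succ := hmono.lt_iff_lt.1 (lt_of_le_of_lt (cls_le p hp0 i) h)
    exact Fin.castSucc_lt_succ_iff.1 this

/-- cardinality of an interval inside `Fin n`. -/
lemma card_interval {n a b : ℕ} (hb : b ≤ n) :
    (Finset.univ.filter fun i : Fin n => a ≤ (i:ℕ) ∧ (i:ℕ) < b).card = b - a := by
  rw [← Nat.card_Ico]
  refine Finset.card_bij' (fun i _ => (i:ℕ))
    (fun m hm => (⟨m, lt_of_lt_of_le (Finset.mem_Ico.1 hm).2 hb⟩ : Fin n)) ?_ ?_ ?_ ?_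
  · intro i hi
    have := Finset.mem_filter.1 hi
    exact Finset.mem_Ico.2 ⟨this.2.1, this.2.2⟩
  · intro m hm
    exact Finset.mem_filter.2 ⟨Finset.mem_univ _, (Finset.mem_Ico.1 hm).1, (Finset.mem_Ico.1 hm).2⟩
  · intro i _; exact Fin.ext rfl
  · intro m _; rfl

lemma card_fiber_castSucc (hmono : StrictMono p) (hpn : p (Fin.last r) ≤ n) (j : Fin r) :
    (Finset.univ.filter fun i : Fin n => cls p hp0 i = j.castSucc).card
      = p j.succ - p j.castSucc := by
  rw [show (Finset.univ.filter fun i : Fin n => cls p hp0 i = j.castSucc)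
      = Finset.univ.filter fun i : Fin n => p j.castSucc ≤ (i:ℕ) ∧ (i:ℕ) < p j.succ from
    Finset.filter_congr fun i _ => by
      rw [cls_eq_castSucc_iff p hp0 hmono]]
  exact card_interval (le_trans (hmono.monotone (Fin.le_last _)) hpn)

lemma card_fiber_last :
    (Finset.univ.filter fun i : Fin n => cls p hp0 i = Fin.last r).card
      = n - p (Fin.last r) := by
  rw [show (Finset.univ.filter fun i : Fin n => cls p hp0 i = Fin.last r)
      = Finset.univ.filter fun i : Fin n => p (Fin.last r) ≤ (i:ℕ) ∧ (i:ℕ) < n from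
    Finset.filter_congr fun i _ => by
      rw [cls_eq_last_iff p hp0]
      exact ⟨fun h => ⟨h, i.isLt⟩, fun h => h.1⟩]
  exact card_interval le_rfl

end Classifier

section Blocks

variable {n r : ℕ} (p : Fin (r+1) → ℕ) (hp0 : p 0 = 0)

/-- the number of `true` bits of `A` in the `j`-th block. -/
def Df (A : Fin n → Bool) (j : Fin r) : ℕ :=
  (Finset.univ.filter fun i : Fin n => cls p hp0 i = j.castSucc ∧ A i = true).card

def cnt {σ : Type*} [Fintype σ] [DecidableEq σ] (u : σ → Bool) : ℕ :=
  (Finset.univ.filter fun x => u x = true).card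

lemma rank_eq_sum (hmono : StrictMono p) (A : Fin n → Bool) (j : Fin r) :
    rank A (p j.succ) = ∑ k ∈ Finset.Iic j, Df p hp0 A k := by
  rw [rank]
  rw [show (Finset.univ.filter fun i : Fin n => (i:ℕ) < p j.succ ∧ A i = true)
      = (Finset.Iic j).biUnion
          (fun k => Finset.univ.filter fun i : Fin n =>
            cls p hp0 i = k.castSucc ∧ A i = true) from ?_]
  · rw [Finset.card_biUnion]
    · rfl
    · intro k₁ _ k₂ _ hne
      rw [Function.onFun, Finset.disjoint_left]
      intro i h1 h2
      rw [Finset.mem_filter] at h1 h2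
      exact hne (Fin.castSucc_injective _ (h1.2.1.symm.trans h2.2.1))
  · ext i
    simp only [Finset.mem_filter, Finset.mem_biUnion, Finset.mem_univ, true_and, Finset.mem_Iic]
    constructor
    · rintro ⟨hlt, hA⟩
      have hle : cls p hp0 i ≤ j.castSucc := (cls_le_castSucc_iff p hp0 hmono j i).2 hlt
      have hne : cls p hp0 i ≠ Fin.last r :=
        ne_of_lt (lt_of_le_of_lt hle (Fin.castSucc_lt_last j))
      obtain ⟨k, hk⟩ := Fin.exists_castSucc_eq.2 hne
      refine ⟨k, ?_, hk.symm, hA⟩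
      · rw [← hk] at hle
        exact Fin.castSucc_le_castSucc_iff.1 hle
    · rintro ⟨k, hkj, hck, hA⟩
      refine ⟨?_, hA⟩
      apply (cls_le_castSucc_iff p hp0 hmono j i).1
      rw [hck]
      exact Fin.castSucc_le_castSucc_iff.2 hkj

lemma Df_le (hmono : StrictMono p) (hpn : p (Fin.last r) ≤ n) (A : Fin n → Bool) (j : Fin r) :
    Df p hp0 A j ≤ p j.succ - p j.castSucc := by
  rw [← card_fiber_castSucc p hp0 hmono hpn j]
  apply Finset.card_le_card
  intro i hi
  rw [Finset.mem_filter] at hi ⊢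
  exact ⟨hi.1, hi.2.1⟩

lemma card_cnt_eq (σ : Type*) [Fintype σ] [DecidableEq σ] (d : ℕ) :
    Fintype.card {u : σ → Bool // cnt u = d} = (Fintype.card σ).choose d := by
  have e : {u : σ → Bool // cnt u = d} ≃ {t : Finset σ // t.card = d} :=
    { toFun := fun u => ⟨Finset.univ.filter (fun x => u.1 x = true), u.2⟩
      invFun := fun t => ⟨fun x => decide (x ∈ t.1), by
        simpa [cnt, Finset.filter_univ_mem] using t.2⟩
      left_inv := fun u => by
        apply Subtype.ext
        funext x
        simp
      right_inv := fun t => by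
        apply Subtype.ext
        simp [Finset.filter_univ_mem] }
  rw [Fintype.card_congr e, Fintype.card_finset_len]

lemma count_blocks (hmono : StrictMono p) (hpn : p (Fin.last r) ≤ n) (d : Fin r → ℕ) :
    (Finset.univ.filter fun A : Fin n → Bool => (fun j => Df p hp0 A j) = d).card
      = (∏ j : Fin r, ((p j.succ - p j.castSucc).choose (d j))) * 2 ^ (n - p (Fin.last r)) := by
  classical
  let e : (Fin n → Bool) ≃ ∀ j', ({i : Fin n // cls p hp0 i = j'} → Bool) :=
    { toFun := fun A j' x => A x.1
      invFun := fun g i => g (cls p hp0 i) ⟨i, rfl⟩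
      left_inv := fun A => rfl
      right_inv := fun g => by
        funext j' x
        obtain ⟨i, hi⟩ := x
        subst hi
        rfl }
  set P : ∀ j' : Fin (r+1), ({i : Fin n // cls p hp0 i = j'} → Bool) → Prop :=
    fun j' u => ∀ j : Fin r, j.castSucc = j' → cnt u = d j with hP
  have hD : ∀ (A : Fin n → Bool) (j : Fin r),
      Df p hp0 A j = cnt (e A j.castSucc) := by
    intro A j
    rw [Df, cnt, ← Fintype.card_subtype, ← Fintype.card_subtype]
    exact (Fintype.card_congr
      (Equiv.subtypeSubtypeEquivSubtypeInter
        (fun i : Fin n => cls p hp0 i = j.castSucc) (fun i => A i = true))).symm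
  calc (Finset.univ.filter fun A : Fin n → Bool => (fun j => Df p hp0 A j) = d).card
      = Fintype.card {A : Fin n → Bool // (fun j => Df p hp0 A j) = d} :=
        (Fintype.card_subtype _).symm
    _ = Fintype.card {g : ∀ j', ({i : Fin n // cls p hp0 i = j'} → Bool) // ∀ j', P j' (g j')} := by
        apply Fintype.card_congr
        apply e.subtypeEquiv
        intro A
        rw [funext_iff]
        constructor
        · intro h j' j hj
          subst hj
          rw [← hD]
          exact h j
        · intro h j
          rw [hD]
          exact h j.castSucc j rfl
    _ = Fintype.card (∀ j', {u : ({i : Fin n // cls p hp0 i = j'} → Bool) // P j' u}) :=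
        Fintype.card_congr (Equiv.subtypePiEquivPi)
    _ = ∏ j', Fintype.card {u : ({i : Fin n // cls p hp0 i = j'} → Bool) // P j' u} := Fintype.card_pi
    _ = (∏ j : Fin r, Fintype.card
            {u : ({i : Fin n // cls p hp0 i = j.castSucc} → Bool) // P j.castSucc u})
          * Fintype.card
            {u : ({i : Fin n // cls p hp0 i = Fin.last r} → Bool) // P (Fin.last r) u} :=
        Fin.prod_univ_castSucc _
    _ = (∏ j : Fin r, ((p j.succ - p j.castSucc).choose (d j))) * 2 ^ (n - p (Fin.last r)) := by
        congr 1
        · apply Finset.prod_congr rfl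
          intro j _
          have e2 : {u : ({i : Fin n // cls p hp0 i = j.castSucc} → Bool) // P j.castSucc u}
              ≃ {u : ({i : Fin n // cls p hp0 i = j.castSucc} → Bool) // cnt u = d j} := by
            apply Equiv.subtypeEquivRight
            intro u
            constructor
            · intro h
              exact h j rfl
            · intro h j₂ hj₂
              have : j₂ = j := Fin.castSucc_injective _ hj₂
              subst this
              exact h
          rw [Fintype.card_congr e2, card_cnt_eq]
          congr 1
          rw [Fintype.card_subtype, card_fiber_castSucc p hp0 hmono hpn j]
        · have e3 : {u : ({i : Fin n // cls p hp0 i = Fin.last r} → Bool) // P (Fin.last r) u}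
              ≃ ({i : Fin n // cls p hp0 i = Fin.last r} → Bool) :=
            Equiv.subtypeUnivEquiv (fun u j hj =>
              absurd hj (ne_of_lt (Fin.castSucc_lt_last j)))
          rw [Fintype.card_congr e3, Fintype.card_fun]
          rw [Fintype.card_subtype, card_fiber_last p hp0, Fintype.card_bool]

end Blocks

def psum {r : ℕ} (d : Fin r → ℕ) : Fin r → ℕ := fun j => ∑ k ∈ Finset.Iic j, d k

lemma psum_injective {r : ℕ} : Function.Injective (psum (r := r)) := by
  intro d e h
  suffices H : ∀ t : ℕ, ∀ j : Fin r, (j : ℕ) = t → d j = e j by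
    funext j
    exact H j.val j rfl
  intro t
  induction t using Nat.strong_induction_on with
  | _ t ih =>
    intro j hj
    have h1 : ∑ k ∈ Finset.Iic j, d k = ∑ k ∈ Finset.Iic j, e k := congrFun h j
    have h2 : ∑ k ∈ Finset.Iio j, d k = ∑ k ∈ Finset.Iio j, e k := by
      apply Finset.sum_congr rfl
      intro k hk
      have hkj : k < j := Finset.mem_Iio.1 hk
      exact ih k.val (by rw [← hj]; exact hkj) k rfl
    rw [← Finset.Iio_insert j, Finset.sum_insert (by simp), Finset.sum_insert (by simp)] at h1
    omega

lemma sum_range_sub_of_monotone (q : ℕ → ℕ) (hq : Monotone q) (r : ℕ) :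
    ∑ k ∈ Finset.range r, (q (k+1) - q k) = q r - q 0 := by
  induction r with
  | zero => simp
  | succ r ihr =>
    rw [Finset.sum_range_succ, ihr]
    have h1 : q 0 ≤ q r := hq (Nat.zero_le r)
    have h2 : q r ≤ q (r+1) := hq (Nat.le_succ r)
    omega

lemma sum_gaps' : ∀ {r : ℕ} (p : Fin (r+1) → ℕ), Monotone p →
    ∑ j : Fin r, (p j.succ - p j.castSucc) = p (Fin.last r) - p 0 := by
  intro r
  induction r with
  | zero => intro p _; simp
  | succ r ih =>
    intro p hp
    rw [Fin.sum_univ_castSucc]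
    have hstep : ∀ j : Fin r, p (Fin.castSucc j).succ - p (Fin.castSucc j).castSucc
        = (fun j' : Fin (r+1) => p j'.castSucc) j.succ
          - (fun j' : Fin (r+1) => p j'.castSucc) j.castSucc := by
      intro j
      simp only []
      rw [Fin.succ_castSucc]
    rw [Finset.sum_congr rfl (fun j _ => hstep j)]
    rw [ih (fun j' => p j'.castSucc) (fun a b hab => hp (by simpa using hab))]
    have h1 : p (0 : Fin (r+2)) ≤ p (Fin.last r).castSucc := hp (Fin.zero_le _)
    have h2 : p (Fin.last r).castSucc ≤ p (Fin.last r).succ :=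
      hp (le_of_lt Fin.castSucc_lt_succ)
    have h3 : (Fin.last r).succ = Fin.last (r+1) := Fin.succ_last r
    rw [← h3]
    simp only [Fin.castSucc_zero]
    omega

lemma sum_gaps {r : ℕ} (p : Fin (r+1) → ℕ) (hp0 : p 0 = 0) (hmono : StrictMono p) :
    ∑ j : Fin r, (p j.succ - p j.castSucc) = p (Fin.last r) := by
  rw [sum_gaps' p hmono.monotone, hp0, Nat.sub_zero]


/-- For `A` uniform on `{0,1}^n`, `m ≥ 1`, and positions `p₁ < ⋯ < p_r ≤ n`
(with `p₀ = 0`) satisfying `p₁ ≥ m` and `p_j − p_{j−1} ≥ m` for all `j`, the joint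
entropy of the rank answers `(R(p₁), …, R(p_r))` is at least `r·h_m`. -/
theorem stmt_6 (n r m : ℕ) (hm : 1 ≤ m) (p : Fin (r + 1) → ℕ)
    (hp0 : p 0 = 0) (hmono : StrictMono p) (hpn : p (Fin.last r) ≤ n)
    (hgap : ∀ j : Fin r, m ≤ p j.succ - p j.castSucc) :
    finEntropy (fun _ : Fin n → Bool => ((2 : ℝ) ^ n)⁻¹)
        (fun A => fun j : Fin r => rank A (p j.succ)) ≥
      (r : ℝ) * binEnt m := by
  have hgsum : ∑ j : Fin r, (p j.succ - p j.castSucc) = p (Fin.last r) :=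
    sum_gaps p hp0 hmono
  have hsum1 : ∀ j : Fin r,
      ∑ i ∈ Finset.range ((p j.succ - p j.castSucc) + 1),
        (((p j.succ - p j.castSucc).choose i : ℝ) / 2 ^ (p j.succ - p j.castSucc)) = 1 := by
    intro j
    rw [← Finset.sum_div]
    rw [show ∑ i ∈ Finset.range ((p j.succ - p j.castSucc) + 1),
        (((p j.succ - p j.castSucc).choose i : ℝ)) = (2:ℝ) ^ (p j.succ - p j.castSucc) from ?_]
    · exact div_self (by positivity)
    · rw [← Nat.cast_sum, Nat.sum_range_choose]
      push_cast
      ring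
  have key : finEntropy (fun _ : Fin n → Bool => ((2 : ℝ) ^ n)⁻¹)
        (fun A => fun j : Fin r => rank A (p j.succ))
      = ∑ j : Fin r, binEnt (p j.succ - p j.castSucc) := by
    have hX : (fun A : Fin n → Bool => fun j : Fin r => rank A (p j.succ))
        = fun A => psum (fun j => Df p hp0 A j) := by
      funext A
      funext j
      exact rank_eq_sum p hp0 hmono A j
    rw [hX, finEntropy_comp_injective _ _ psum psum_injective]
    have himg : Finset.univ.image (fun A : Fin n → Bool => fun j : Fin r => Df p hp0 A j)
        ⊆ Fintype.piFinset (fun j : Fin r =>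
            Finset.range ((p j.succ - p j.castSucc) + 1)) := by
      intro d hd
      obtain ⟨A, _, hA⟩ := Finset.mem_image.1 hd
      rw [Fintype.mem_piFinset]
      intro j
      rw [← hA]
      rw [Finset.mem_range]
      exact Nat.lt_succ_of_le (Df_le p hp0 hmono hpn A j)
    rw [finEntropy_eq_sum _ _ _ himg]
    have hprob : ∀ d : Fin r → ℕ,
        (∑ ω ∈ Finset.univ.filter
            (fun A : Fin n → Bool => (fun j : Fin r => Df p hp0 A j) = d),
          ((2:ℝ)^n)⁻¹)
          = ∏ j : Fin r,
              (((p j.succ - p j.castSucc).choose (d j) : ℝ) / 2 ^ (p j.succ - p j.castSucc)) := by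
      intro d
      rw [Finset.sum_const, nsmul_eq_mul, count_blocks p hp0 hmono hpn d]
      have h2n : (2:ℝ)^n = 2 ^ (p (Fin.last r)) * 2 ^ (n - p (Fin.last r)) := by
        rw [← pow_add]
        congr 1
        omega
      rw [Finset.prod_div_distrib]
      rw [Finset.prod_pow_eq_pow_sum, hgsum]
      push_cast
      rw [h2n]
      have hne1 : ((2:ℝ) ^ (p (Fin.last r))) ≠ 0 := by positivity
      have hne2 : ((2:ℝ) ^ (n - p (Fin.last r))) ≠ 0 := by positivity
      field_simp
    calc ∑ d ∈ Fintype.piFinset (fun j : Fin r =>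
            Finset.range ((p j.succ - p j.castSucc) + 1)),
          Real.negMulLog (∑ ω ∈ Finset.univ.filter
            (fun A : Fin n → Bool => (fun j : Fin r => Df p hp0 A j) = d),
            ((2:ℝ)^n)⁻¹)
        = ∑ d ∈ Fintype.piFinset (fun j : Fin r =>
            Finset.range ((p j.succ - p j.castSucc) + 1)),
          Real.negMulLog (∏ j : Fin r,
            (((p j.succ - p j.castSucc).choose (d j) : ℝ) / 2 ^ (p j.succ - p j.castSucc))) :=
          Finset.sum_congr rfl fun d _ => by rw [hprob d]
      _ = ∑ j : Fin r, ∑ i ∈ Finset.range ((p j.succ - p j.castSucc) + 1),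
            Real.negMulLog
              (((p j.succ - p j.castSucc).choose i : ℝ) / 2 ^ (p j.succ - p j.castSucc)) :=
          sum_negMulLog_prod _ _ hsum1
      _ = ∑ j : Fin r, binEnt (p j.succ - p j.castSucc) :=
          Finset.sum_congr rfl fun j _ => (binEnt_eq_s6 _).symm
  rw [ge_iff_le, key]
  calc (r : ℝ) * binEnt m = ∑ _j : Fin r, binEnt m := by
        rw [Finset.sum_const, Finset.card_univ, Fintype.card_fin, nsmul_eq_mul]
    _ ≤ ∑ j : Fin r, binEnt (p j.succ - p j.castSucc) :=
        Finset.sum_le_sum fun j _ => binEnt_mono (hgap j)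
end
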